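/- For every integer k ≥ 2 there is a constant C = C(k) such that every properly edge-coloured graph on n vertices with no rainbow cycle of length 2k contains at most C·n^2 paths of length 2 (as subgraphs). -/

import Mathlib

open SimpleGraph

/-- A colouring of (potential) edges is proper on `G` if no two distinct edges of `G`
sharing a vertex receive the same colour. -/
def ProperColoring {V γ : Type*} (G : SimpleGraph V) (c : Sym2 V → γ) : Prop :=
  ∀ e f : Sym2 V, e ∈ G.edgeSet → f ∈ G.edgeSet → e ≠ f → (∃ v, v ∈ e ∧ v ∈ f) → c e ≠ c f

/-- `G` (with colouring `c`) contains a rainbow cycle of length `t`. -/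
def HasRainbowCycle {V γ : Type*} (G : SimpleGraph V) (c : Sym2 V → γ) (t : ℕ) : Prop :=
  ∃ (u : V) (w : G.Walk u u), w.IsCycle ∧ w.length = t ∧ (w.edges.map c).Nodup

namespace RainbowC2k

set_option linter.unusedSectionVars false

variable {V : Type} [Fintype V] [DecidableEq V] (G : SimpleGraph V) [DecidableRel G.Adj]

/-- number of walks of length `m` from `u` to `v`. -/
def g2 : ℕ → V → V → ℕ
  | 0, u, v => if u = v then 1 else 0
  | m+1, u, v => ∑ w ∈ G.neighborFinset v, g2 m u w

@[simp] lemma g2_zero (u v : V) : g2 G 0 u v = if u = v then 1 else 0 := rfl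

lemma g2_succ (m : ℕ) (u v : V) :
    g2 G (m+1) u v = ∑ w ∈ G.neighborFinset v, g2 G m u w := rfl

lemma g2_succ_left (m : ℕ) (u v : V) :
    g2 G (m+1) u v = ∑ w ∈ G.neighborFinset u, g2 G m w v := by
  induction m generalizing u v with
  | zero =>
    simp only [g2_succ, g2_zero]
    rw [Finset.sum_ite_eq (G.neighborFinset v) u (fun _ => 1),
        Finset.sum_ite_eq' (G.neighborFinset u) v (fun _ => 1)]
    simp [G.adj_comm u v]
  | succ m ih =>
    rw [g2_succ]
    rw [Finset.sum_congr rfl fun w _ => ih u w]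
    rw [Finset.sum_comm]
    rfl

lemma g2_symm (m : ℕ) (u v : V) : g2 G m u v = g2 G m v u := by
  induction m generalizing u v with
  | zero => simp [eq_comm]
  | succ m ih =>
    rw [g2_succ, g2_succ_left]
    exact Finset.sum_congr rfl fun w _ => ih u w

lemma g2_add (a b : ℕ) (u v : V) :
    g2 G (a+b) u v = ∑ w, g2 G a u w * g2 G b w v := by
  induction b generalizing v with
  | zero => simp [g2_zero]
  | succ b ih =>
    rw [show a + (b+1) = (a+b)+1 by ring, g2_succ]
    rw [Finset.sum_congr rfl fun w _ => ih w]
    rw [Finset.sum_comm]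
    refine Finset.sum_congr rfl fun w _ => ?_
    rw [← Finset.mul_sum, g2_succ]

/-- number of walks of length `m` ending at `v`. -/
def g (m : ℕ) (v : V) : ℕ := ∑ u, g2 G m u v

@[simp] lemma g_zero (v : V) : g G 0 v = 1 := by simp [g, g2_zero]

lemma g_succ (m : ℕ) (v : V) : g G (m+1) v = ∑ w ∈ G.neighborFinset v, g G m w := by
  rw [g]
  rw [Finset.sum_congr rfl fun u (_ : u ∈ Finset.univ) => g2_succ G m u v]
  rw [Finset.sum_comm]
  rfl

/-- number of walks of length `m`. -/
def p (m : ℕ) : ℕ := ∑ v, g G m v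

lemma p_zero : p G 0 = Fintype.card V := by simp [p]

/-- swapping a sum over directed edges -/
lemma sum_nb_comm (F : V → V → ℕ) :
    ∑ v, ∑ w ∈ G.neighborFinset v, F v w = ∑ v, ∑ w ∈ G.neighborFinset v, F w v := by
  rw [Finset.sum_comm' (s := Finset.univ) (t := fun v => G.neighborFinset v)
    (t' := Finset.univ) (s' := fun w => G.neighborFinset w) ?_]
  intro x y
  simp [G.adj_comm x y]

lemma s_shift (a b : ℕ) : ∑ v, g G (a+1) v * g G b v = ∑ v, g G a v * g G (b+1) v := by
  have h1 : ∑ v, g G (a+1) v * g G b v = ∑ v, ∑ w ∈ G.neighborFinset v, g G a w * g G b v := by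
    refine Finset.sum_congr rfl fun v _ => ?_
    rw [g_succ, Finset.sum_mul]
  have h2 : ∑ v, g G a v * g G (b+1) v = ∑ v, ∑ w ∈ G.neighborFinset v, g G a v * g G b w := by
    refine Finset.sum_congr rfl fun v _ => ?_
    rw [g_succ, Finset.mul_sum]
  rw [h1, h2, sum_nb_comm G (fun v w => g G a w * g G b v)]

lemma s_eq_p (a b : ℕ) : ∑ v, g G a v * g G b v = p G (a+b) := by
  induction a generalizing b with
  | zero => simp [p]
  | succ a ih =>
    rw [s_shift, ih (b+1)]
    congr 1
    ring

lemma cs_nat (f h : V → ℕ) : (∑ v, f v * h v)^2 ≤ (∑ v, f v^2) * (∑ v, h v^2) :=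
  Finset.sum_mul_sq_le_sq_mul_sq Finset.univ f h

lemma cs1 (a b : ℕ) : p G (a+b) ^ 2 ≤ p G (2*a) * p G (2*b) := by
  calc p G (a+b) ^ 2 = (∑ v, g G a v * g G b v)^2 := by rw [s_eq_p]
  _ ≤ (∑ v, g G a v ^ 2) * (∑ v, g G b v ^ 2) := cs_nat (g G a) (g G b)
  _ = p G (2*a) * p G (2*b) := by
      rw [two_mul, two_mul, ← s_eq_p, ← s_eq_p]
      simp [pow_two]

lemma g_pos_of_adj : ∀ (m : ℕ) (u v : V), G.Adj u v → 0 < g G m u := by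
  intro m
  induction m with
  | zero => intro u v _; simp
  | succ m ih =>
    intro u v huv
    rw [g_succ]
    have hv : v ∈ G.neighborFinset u := by simpa using huv
    calc 0 < g G m v := ih v u huv.symm
    _ ≤ ∑ w ∈ G.neighborFinset u, g G m w :=
        Finset.single_le_sum (fun w _ => Nat.zero_le _) hv

lemma p_pos (hp : 0 < p G 2) (m : ℕ) : 0 < p G m := by
  obtain ⟨v, -, hv⟩ := Finset.exists_lt_of_sum_lt (f := fun _ : V => 0) (by simpa [p] using hp)
  rw [g_succ] at hv
  obtain ⟨w, hw, hgw⟩ := Finset.exists_lt_of_sum_lt (f := fun _ : V => 0) (by simpa using hv)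
  have hadj : G.Adj v w := by simpa using hw
  calc 0 < g G m v := g_pos_of_adj G m v w hadj
  _ ≤ p G m := Finset.single_le_sum (fun x _ => Nat.zero_le _) (Finset.mem_univ v)

lemma ratio (hp : 0 < p G 2) : ∀ m, 1 ≤ m → p G (2*m) * p G 2 ≤ p G (2*m+2) * Fintype.card V := by
  intro m
  induction m with
  | zero => omega
  | succ m ih =>
    intro _
    rcases Nat.eq_or_lt_of_le (Nat.one_le_iff_ne_zero.mpr (Nat.succ_ne_zero m)) with h1 | h1
    · -- m = 0 : base case
      have hm : m = 0 := by omega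
      subst hm
      have := cs1 G 0 2
      calc p G 2 * p G 2 = p G (0+2) ^ 2 := by ring_nf
      _ ≤ p G 0 * p G 4 := cs1 G 0 2
      _ = p G 4 * Fintype.card V := by rw [p_zero]; ring
    · -- m ≥ 1
      have hm : 1 ≤ m := by omega
      have ihm := ih hm
      have hcs : p G (2*m+2) ^ 2 ≤ p G (2*m) * p G (2*m+4) := by
        have := cs1 G m (m+2)
        have e1 : m + (m+2) = 2*m+2 := by ring
        have e2 : 2*(m+2) = 2*m+4 := by ring
        rwa [e1, e2] at this
      have key : (p G (2*(m+1)) * p G 2) * p G (2*m) ≤ (p G (2*(m+1)+2) * Fintype.card V) * p G (2*m) := by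
        rw [show 2*(m+1) = 2*m+2 by ring, show 2*m+2+2 = 2*m+4 by ring]
        calc p G (2*m+2) * p G 2 * p G (2*m)
            = (p G (2*m) * p G 2) * p G (2*m+2) := by ring
        _ ≤ (p G (2*m+2) * Fintype.card V) * p G (2*m+2) := Nat.mul_le_mul_right _ ihm
        _ = p G (2*m+2)^2 * Fintype.card V := by ring
        _ ≤ (p G (2*m) * p G (2*m+4)) * Fintype.card V := Nat.mul_le_mul_right _ hcs
        _ = p G (2*m+4) * Fintype.card V * p G (2*m) := by ring
      exact Nat.le_of_mul_le_mul_right key (p_pos G hp (2*m))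

lemma chain (hp : 0 < p G 2) : ∀ j, p G 2 ^ (j+1) ≤ Fintype.card V ^ j * p G (2*(j+1)) := by
  intro j
  induction j with
  | zero => simp
  | succ j ih =>
    calc p G 2 ^ (j+2) = p G 2 ^ (j+1) * p G 2 := by ring
    _ ≤ Fintype.card V ^ j * p G (2*(j+1)) * p G 2 := Nat.mul_le_mul_right _ ih
    _ = Fintype.card V ^ j * (p G (2*(j+1)) * p G 2) := by ring
    _ ≤ Fintype.card V ^ j * (p G (2*(j+1)+2) * Fintype.card V) :=
        Nat.mul_le_mul_left _ (ratio G hp (j+1) (by omega))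
    _ = Fintype.card V ^ (j+1) * p G (2*(j+2)) := by
        have : 2*(j+1)+2 = 2*(j+2) := by ring
        rw [this]; ring

lemma interp (hp : 0 < p G 2) : ∀ m, p G (2*m) ^ (m+1) ≤ p G (2*m+2) ^ m * Fintype.card V := by
  intro m
  induction m with
  | zero => simp [p_zero]
  | succ m ih =>
    have hcs : p G (2*m+2) ^ 2 ≤ p G (2*m) * p G (2*m+4) := by
      have := cs1 G m (m+2)
      have e1 : m + (m+2) = 2*m+2 := by ring
      have e2 : 2*(m+2) = 2*m+4 := by ring
      rwa [e1, e2] at this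
    have key : p G (2*(m+1)) ^ (m+2) * p G (2*m+2) ^ m
        ≤ (p G (2*(m+1)+2) ^ (m+1) * Fintype.card V) * p G (2*m+2) ^ m := by
      rw [show 2*(m+1) = 2*m+2 by ring, show 2*m+2+2 = 2*m+4 by ring]
      calc p G (2*m+2) ^ (m+2) * p G (2*m+2) ^ m = (p G (2*m+2) ^ 2) ^ (m+1) := by ring
      _ ≤ (p G (2*m) * p G (2*m+4)) ^ (m+1) := Nat.pow_le_pow_left hcs _
      _ = p G (2*m) ^ (m+1) * p G (2*m+4) ^ (m+1) := by ring
      _ ≤ (p G (2*m+2) ^ m * Fintype.card V) * p G (2*m+4) ^ (m+1) := Nat.mul_le_mul_right _ ih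
      _ = p G (2*m+4) ^ (m+1) * Fintype.card V * p G (2*m+2) ^ m := by ring
    exact Nat.le_of_mul_le_mul_right key (pow_pos (p_pos G hp (2*m+2)) m)


/-- walk condition for a function `Fin (m+1) → V`. -/
def IsWalkFun (m : ℕ) (f : Fin (m+1) → V) : Prop :=
  ∀ i : Fin m, G.Adj (f i.castSucc) (f i.succ)

instance (m : ℕ) : DecidablePred (IsWalkFun G m) := fun _ => Fintype.decidableForallFintype

lemma isWalkFun_init {m : ℕ} {f : Fin (m+2) → V} (hf : IsWalkFun G (m+1) f) :
    IsWalkFun G m (Fin.init f) := by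
  intro i
  have h := hf i.castSucc
  rw [Fin.succ_castSucc] at h
  simpa [Fin.init] using h

lemma isWalkFun_snoc {m : ℕ} {f : Fin (m+1) → V} {v : V} (hf : IsWalkFun G m f)
    (h : G.Adj (f (Fin.last m)) v) : IsWalkFun G (m+1) (Fin.snoc f v) := by
  intro i
  refine Fin.lastCases ?_ ?_ i
  · rw [Fin.succ_last, Fin.snoc_last, Fin.snoc_castSucc]
    exact h
  · intro j
    rw [Fin.succ_castSucc, Fin.snoc_castSucc, Fin.snoc_castSucc]
    exact hf j

lemma snoc_zero' {m : ℕ} (f : Fin (m+1) → V) (v : V) :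
    (Fin.snoc f v : Fin (m+2) → V) 0 = f 0 := by
  rw [← Fin.castSucc_zero, Fin.snoc_castSucc]

/-- number of walks with prescribed endpoints equals `g2`. -/
lemma card_walkE : ∀ (m : ℕ) (u v : V),
    Fintype.card {f : Fin (m+1) → V // IsWalkFun G m f ∧ f 0 = u ∧ f (Fin.last m) = v}
      = g2 G m u v := by
  intro m
  induction m with
  | zero =>
    intro u v
    by_cases h : u = v
    · subst h
      rw [g2_zero, if_pos rfl]
      rw [Fintype.card_eq_one_iff]
      refine ⟨⟨fun _ => u, fun i => i.elim0, rfl, ?_⟩, ?_⟩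
      · rfl
      · rintro ⟨f, -, h0, -⟩
        apply Subtype.ext
        funext i
        have hi : i = 0 := by
          apply Fin.ext
          have := i.isLt; omega
        show f i = u
        rw [hi]
        exact h0
    · rw [g2_zero, if_neg h]
      rw [Fintype.card_eq_zero_iff]
      constructor
      rintro ⟨f, -, h0, hl⟩
      apply h
      rw [← h0, ← hl]
      exact congrArg f (by decide)
  | succ m ih =>
    intro u v
    classical
    have hfib := Fintype.sum_fiberwise
      (g := fun x : {f : Fin (m+2) → V // IsWalkFun G (m+1) f ∧ f 0 = u ∧ f (Fin.last (m+1)) = v} =>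
        x.1 ((Fin.last m).castSucc))
      (f := fun _ => (1 : ℕ))
    simp only [Finset.sum_const, Finset.card_univ, smul_eq_mul, mul_one] at hfib
    rw [← hfib, g2_succ]
    have hcard : ∀ w : V,
        Fintype.card {x : {f : Fin (m+2) → V // IsWalkFun G (m+1) f ∧ f 0 = u ∧ f (Fin.last (m+1)) = v} //
          x.1 ((Fin.last m).castSucc) = w}
        = if G.Adj v w then g2 G m u w else 0 := by
      intro w
      by_cases hadj : G.Adj v w
      · rw [if_pos hadj]
        rw [← ih u w]
        apply Fintype.card_congr
        refine ⟨fun x => ⟨Fin.init x.1.1, isWalkFun_init G x.1.2.1, ?_, ?_⟩,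
          fun y => ⟨⟨Fin.snoc y.1 v, ?_, ?_, ?_⟩, ?_⟩, ?_, ?_⟩
        · show x.1.1 ((0 : Fin (m+1)).castSucc) = u
          rw [Fin.castSucc_zero]
          exact x.1.2.2.1
        · show x.1.1 ((Fin.last m).castSucc) = w
          exact x.2
        · refine isWalkFun_snoc G y.2.1 ?_
          rw [y.2.2.2]
          exact hadj.symm
        · rw [snoc_zero']
          exact y.2.2.1
        · exact Fin.snoc_last _ _
        · simp only [Fin.snoc_castSucc]
          exact y.2.2.2
        · intro x
          apply Subtype.ext
          apply Subtype.ext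
          show Fin.snoc (Fin.init x.1.1) v = x.1.1
          have hs := Fin.snoc_init_self x.1.1
          rw [x.1.2.2.2] at hs
          exact hs
        · intro y
          apply Subtype.ext
          exact Fin.init_snoc (α := fun _ : Fin (m+2) => V) v y.1
      · rw [if_neg hadj]
        rw [Fintype.card_eq_zero_iff]
        constructor
        intro x
        obtain ⟨⟨f, hw, h0, hl⟩, hpre⟩ := x
        apply hadj
        have h := hw (Fin.last m)
        rw [Fin.succ_last] at h
        rw [hl] at h
        have hpre' : f ((Fin.last m).castSucc) = w := hpre
        rw [hpre'] at h
        exact h.symm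
    rw [Finset.sum_congr rfl fun w (_ : w ∈ Finset.univ) => hcard w]
    rw [← Finset.sum_filter]
    apply Finset.sum_congr _ (fun _ _ => rfl)
    ext w
    simp [SimpleGraph.mem_neighborFinset]

/-- total number of walk functions equals `p`. -/
lemma card_walkT (m : ℕ) :
    Fintype.card {f : Fin (m+1) → V // IsWalkFun G m f} = p G m := by
  classical
  have hfib := Fintype.sum_fiberwise
    (g := fun x : {f : Fin (m+1) → V // IsWalkFun G m f} => (x.1 0, x.1 (Fin.last m)))
    (f := fun _ => (1 : ℕ))
  simp only [Finset.sum_const, Finset.card_univ, smul_eq_mul, mul_one] at hfib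
  rw [← hfib]
  have hcard : ∀ uv : V × V,
      Fintype.card {x : {f : Fin (m+1) → V // IsWalkFun G m f} // (x.1 0, x.1 (Fin.last m)) = uv}
        = g2 G m uv.1 uv.2 := by
    intro uv
    rw [← card_walkE G m uv.1 uv.2]
    apply Fintype.card_congr
    refine ⟨fun x => ⟨x.1.1, x.1.2, ?_, ?_⟩, fun y => ⟨⟨y.1, y.2.1⟩, ?_⟩, ?_, ?_⟩
    · exact congrArg Prod.fst x.2
    · exact congrArg Prod.snd x.2
    · show (y.1 0, y.1 (Fin.last m)) = uv
      rw [y.2.2.1, y.2.2.2]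
    · intro x; apply Subtype.ext; rfl
    · intro y; apply Subtype.ext; rfl
  rw [Finset.sum_congr rfl fun uv (_ : uv ∈ Finset.univ) => hcard uv]
  rw [Fintype.sum_prod_type]
  rw [p, Finset.sum_comm]
  rfl

section Closed

variable (K : ℕ) [NeZero K]

/-- closed walk condition for a function `Fin K → V`. -/
def IsClosedFun (f : Fin K → V) : Prop := ∀ i : Fin K, G.Adj (f i) (f (i + 1))

instance : DecidablePred (IsClosedFun G K) := fun _ => Fintype.decidableForallFintype

/-- number of closed walks -/
def Ncl : ℕ := ∑ v, g2 G K v v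

lemma fin_add_one_val (i : Fin K) : ((i + 1 : Fin K)).val = (i.val + 1) % K := by
  rw [Fin.add_def]
  have h1 : ((1 : Fin K)).val = 1 % K := Fin.val_one' K
  rw [h1]
  conv_rhs => rw [Nat.add_mod, Nat.mod_eq_of_lt i.isLt]

lemma card_closed :
    Fintype.card {f : Fin K → V // IsClosedFun G K f} = Ncl G K := by
  classical
  have hK : 0 < K := Nat.pos_of_ne_zero (NeZero.ne K)
  -- the "loop" type
  have e1 : {f : Fin K → V // IsClosedFun G K f} ≃
      {f : Fin (K+1) → V // IsWalkFun G K f ∧ f (Fin.last K) = f 0} := by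
    have fmod : Fin (K+1) → Fin K := fun j => ⟨j.val % K, Nat.mod_lt _ hK⟩
    refine ⟨fun x => ⟨fun j => x.1 ⟨j.val % K, Nat.mod_lt _ hK⟩, ?_, ?_⟩,
      fun y => ⟨fun i => y.1 i.castSucc, ?_⟩, ?_, ?_⟩
    · intro i
      have h := x.2 ⟨i.val, i.isLt⟩
      have h1 : (⟨(i.castSucc).val % K, Nat.mod_lt _ hK⟩ : Fin K) = ⟨i.val, i.isLt⟩ := by
        apply Fin.ext
        simp [Nat.mod_eq_of_lt i.isLt]
      have h2 : (⟨(i.succ).val % K, Nat.mod_lt _ hK⟩ : Fin K) = ⟨i.val, i.isLt⟩ + 1 := by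
        apply Fin.ext
        rw [fin_add_one_val]
        simp
      show G.Adj (x.1 ⟨(i.castSucc).val % K, Nat.mod_lt _ hK⟩) (x.1 ⟨(i.succ).val % K, Nat.mod_lt _ hK⟩)
      rw [h1, h2]
      exact h
    · show x.1 ⟨(Fin.last K).val % K, Nat.mod_lt _ hK⟩ = x.1 ⟨(0 : Fin (K+1)).val % K, Nat.mod_lt _ hK⟩
      exact congrArg x.1 (by apply Fin.ext; simp)
    · intro i
      show G.Adj (y.1 i.castSucc) (y.1 ((i+1 : Fin K)).castSucc)
      by_cases hi : i.val + 1 < K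
      · have h := y.2.1 ⟨i.val, Nat.lt_of_succ_lt hi⟩
        have h1 : (⟨i.val, Nat.lt_of_succ_lt hi⟩ : Fin K).castSucc = i.castSucc := by
          apply Fin.ext; rfl
        have h2 : (⟨i.val, Nat.lt_of_succ_lt hi⟩ : Fin K).succ = (i+1).castSucc := by
          apply Fin.ext
          show i.val + 1 = ((i+1 : Fin K)).val
          rw [fin_add_one_val, Nat.mod_eq_of_lt hi]
        rw [h1, h2] at h
        exact h
      · have hiv : i.val + 1 = K := by
          have := i.isLt; omega
        have h := y.2.1 ⟨i.val, i.isLt⟩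
        have h1 : (⟨i.val, i.isLt⟩ : Fin K).castSucc = i.castSucc := by
          apply Fin.ext; rfl
        have h2 : (⟨i.val, i.isLt⟩ : Fin K).succ = Fin.last K := by
          apply Fin.ext
          show i.val + 1 = K
          exact hiv
        rw [h1, h2, y.2.2] at h
        have h3 : ((i+1 : Fin K)).castSucc = 0 := by
          apply Fin.ext
          show ((i+1 : Fin K)).val = 0
          rw [fin_add_one_val, hiv, Nat.mod_self]
        rw [h3]
        exact h
    · intro x
      apply Subtype.ext
      funext i
      show x.1 ⟨(i.castSucc).val % K, Nat.mod_lt _ hK⟩ = x.1 i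
      exact congrArg x.1 (by apply Fin.ext; simp [Nat.mod_eq_of_lt i.isLt])
    · intro y
      apply Subtype.ext
      funext j
      by_cases hj : j.val < K
      · show y.1 ((⟨j.val % K, Nat.mod_lt _ hK⟩ : Fin K)).castSucc = y.1 j
        exact congrArg y.1 (by apply Fin.ext; simp [Nat.mod_eq_of_lt hj])
      · have hjv : j.val = K := by have := j.isLt; omega
        show y.1 ((⟨j.val % K, Nat.mod_lt _ hK⟩ : Fin K)).castSucc = y.1 j
        have h0 : (⟨j.val % K, Nat.mod_lt _ hK⟩ : Fin K).castSucc = (0 : Fin (K+1)) := by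
          apply Fin.ext
          show j.val % K = 0
          rw [hjv, Nat.mod_self]
        have hjl : j = Fin.last K := by apply Fin.ext; exact hjv
        rw [h0, hjl, ← y.2.2]
  rw [Fintype.card_congr e1]
  have hfib := Fintype.sum_fiberwise
    (g := fun x : {f : Fin (K+1) → V // IsWalkFun G K f ∧ f (Fin.last K) = f 0} => x.1 0)
    (f := fun _ => (1 : ℕ))
  simp only [Finset.sum_const, Finset.card_univ, smul_eq_mul, mul_one] at hfib
  rw [← hfib, Ncl]
  refine Finset.sum_congr rfl fun v _ => ?_
  rw [← card_walkE G K v v]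
  apply Fintype.card_congr
  refine ⟨fun x => ⟨x.1.1, x.1.2.1, x.2, by rw [x.1.2.2, x.2]⟩,
    fun y => ⟨⟨y.1, y.2.1, by rw [y.2.2.1, y.2.2.2]⟩, y.2.2.1⟩, ?_, ?_⟩
  · intro x; apply Subtype.ext; apply Subtype.ext; rfl
  · intro y; apply Subtype.ext; rfl

end Closed

/-- closed walk count dominates `p (2k) / n`. -/
lemma p_le_card_mul_N (k : ℕ) [NeZero (2*k)] :
    p G (2*k) ≤ Fintype.card V * Ncl G (2*k) := by
  have h1 : p G (2*k) = ∑ v, g G k v * g G k v := by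
    rw [s_eq_p]; congr 1; ring
  rw [h1, Ncl, Finset.mul_sum]
  refine Finset.sum_le_sum fun v _ => ?_
  have hcs : (∑ u, g2 G k u v * 1)^2 ≤ (∑ u, (g2 G k u v)^2) * (∑ u : V, (1:ℕ)^2) :=
    cs_nat (fun u => g2 G k u v) (fun _ => 1)
  simp only [mul_one, one_pow, Finset.sum_const, Finset.card_univ, smul_eq_mul] at hcs
  have h2 : g2 G (2*k) v v = ∑ u, g2 G k u v * g2 G k u v := by
    rw [two_mul, g2_add]
    refine Finset.sum_congr rfl fun u _ => ?_
    rw [g2_symm G k v u]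
  rw [h2]
  have e3 : (∑ u, (g2 G k u v)^2) = ∑ u, g2 G k u v * g2 G k u v :=
    Finset.sum_congr rfl fun u _ => by ring
  calc g G k v * g G k v = (∑ u, g2 G k u v)^2 := by rw [g]; ring
  _ ≤ (∑ u, (g2 G k u v)^2) * Fintype.card V := hcs
  _ = Fintype.card V * ∑ u, g2 G k u v * g2 G k u v := by rw [e3, mul_comm]


section Deletion

variable (M : ℕ)

/-- delete position `d` from a cyclic sequence -/
def delMap (d : Fin (M+4)) (f : Fin (M+4) → V) : Fin (M+3) → V :=
  fun t => f (d + 1 + (Fin.castLE (by omega) t))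

lemma add_one_mod_helper (n x : ℕ) (hn : 2 ≤ n) : (x % n + 1) % n = (x + 1) % n := by
  have h1n : 1 % n = 1 := Nat.mod_eq_of_lt (by omega)
  conv_rhs => rw [Nat.add_mod, h1n]

lemma delMap_walk (d : Fin (M+4)) {f : Fin (M+4) → V} (hf : IsClosedFun G (M+4) f) :
    IsWalkFun G (M+2) (delMap M d f) := by
  have h34 : M+3 ≤ M+4 := by omega
  intro i
  show G.Adj (f (d + 1 + (Fin.castLE h34 i.castSucc)))
    (f (d + 1 + (Fin.castLE h34 i.succ)))
  have key : d + 1 + (Fin.castLE h34 i.succ)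
      = (d + 1 + (Fin.castLE h34 i.castSucc)) + 1 := by
    apply Fin.ext
    have hL : (d + 1 + (Fin.castLE h34 i.succ)).val
        = ((d + 1 : Fin (M+4)).val + (i.val + 1)) % (M+4) := by
      rw [Fin.val_add, Fin.coe_castLE, Fin.val_succ]
    have hR1 : ((d + 1 + (Fin.castLE h34 i.castSucc)) + 1).val
        = ((d + 1 + (Fin.castLE h34 i.castSucc)).val + 1) % (M+4) := fin_add_one_val _ _
    have hR2 : (d + 1 + (Fin.castLE h34 i.castSucc)).val
        = ((d + 1 : Fin (M+4)).val + i.val) % (M+4) := by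
      rw [Fin.val_add, Fin.coe_castLE, Fin.coe_castSucc]
    rw [hL, hR1, hR2, add_one_mod_helper (M+4) _ (by omega)]
    rfl
  rw [key]
  exact hf _

lemma delMap_eq_on (d : Fin (M+4)) {f f' : Fin (M+4) → V}
    (h : delMap M d f = delMap M d f') : ∀ j : Fin (M+4), j ≠ d → f j = f' j := by
  intro j hj
  have hs : (j - (d+1)).val ≠ M+3 := by
    intro hsv
    apply hj
    have hj2 : j = (j - (d+1)) + (d+1) := (sub_add_cancel j (d+1)).symm
    have hone : ((j - (d+1)) + 1 : Fin (M+4)) = 0 := by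
      apply Fin.ext
      rw [fin_add_one_val, hsv]
      simp
    calc j = (j - (d+1)) + (d+1) := hj2
    _ = d + ((j - (d+1)) + 1) := by open Fin.CommRing in ring
    _ = d + 0 := by rw [hone]
    _ = d := by open Fin.CommRing in ring
  have hlt : (j - (d+1)).val < M + 3 := by
    have := (j - (d+1)).isLt
    omega
  have ht : d + 1 + (Fin.castLE (by omega : M+3 ≤ M+4) (⟨(j - (d+1)).val, hlt⟩ : Fin (M+3))) = j := by
    have hcast : (Fin.castLE (by omega : M+3 ≤ M+4) (⟨(j - (d+1)).val, hlt⟩ : Fin (M+3))) = j - (d+1) := by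
      apply Fin.ext
      rfl
    rw [hcast]
    calc d + 1 + (j - (d+1)) = (j - (d+1)) + (d+1) := by open Fin.CommRing in ring
    _ = j := sub_add_cancel j (d+1)
  have := congrFun h (⟨(j - (d+1)).val, hlt⟩ : Fin (M+3))
  show f j = f' j
  rw [← ht]
  exact this

variable {γ : Type} (c : Sym2 V → γ)

/-- the `i`-th edge of a cyclic sequence. -/
def edgeAt (f : Fin (M+4) → V) (i : Fin (M+4)) : Sym2 V := s(f i, f (i+1))

def BadCol (f : Fin (M+4) → V) : Prop :=
  ∃ i j : Fin (M+4), i ≠ j ∧ i ≠ j + 1 ∧ c (edgeAt M f i) = c (edgeAt M f j)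

def GoodFun (f : Fin (M+4) → V) : Prop :=
  Function.Injective f ∧ ∀ i j : Fin (M+4), i ≠ j → c (edgeAt M f i) ≠ c (edgeAt M f j)

lemma two_ne_zero_fin : (2 : Fin (M+4)) ≠ 0 := by
  intro h
  have h2 : ((2 : Fin (M+4))).val = 0 := by rw [h]; rfl
  have h3 : ((2 : Fin (M+4))).val = 2 := rfl
  omega

lemma cover (f : Fin (M+4) → V) :
    ¬Function.Injective f ∨ BadCol M c f ∨ GoodFun M c f := by
  by_cases hinj : Function.Injective f
  · right
    by_cases hcol : ∃ i j : Fin (M+4), i ≠ j ∧ c (edgeAt M f i) = c (edgeAt M f j)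
    · left
      obtain ⟨i, j, hij, hc⟩ := hcol
      by_cases hij1 : i = j + 1
      · refine ⟨j, i, hij.symm, ?_, hc.symm⟩
        intro hji1
        rw [hji1] at hij1
        have : (2 : Fin (M+4)) = 0 := by
          have h0 : i = i + 2 := by
            calc i = i + 1 + 1 := hij1
            _ = i + 2 := by open Fin.CommRing in ring
          have := left_eq_add.mp h0
          exact this
        exact two_ne_zero_fin M this
      · exact ⟨i, j, hij, hij1, hc⟩
    · right
      push_neg at hcol
      exact ⟨hinj, hcol⟩
  · left
    exact hinj

end Deletion


section BuildWalk

variable (M : ℕ)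

def idx (a : ℕ) : Fin (M+4) := ⟨a % (M+4), Nat.mod_lt _ (by omega)⟩

def mkWalk (f : Fin (M+4) → V) (hc : IsClosedFun G (M+4) f) :
    (t : ℕ) → (r : ℕ) → (h : r + t + 1 = M + 4) → G.Walk (f ⟨r, by omega⟩) (f 0)
  | 0, r, h => SimpleGraph.Walk.cons (by
      have h2 := hc ⟨r, by omega⟩
      have h3 : ((⟨r, by omega⟩ : Fin (M+4)) + 1) = 0 := by
        apply Fin.ext
        rw [fin_add_one_val]
        show (r + 1) % (M+4) = (0 : Fin (M+4)).val
        rw [show r + 1 = M+4 by omega, Nat.mod_self, Fin.val_zero]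
      rwa [h3] at h2) SimpleGraph.Walk.nil
  | (t+1), r, h => SimpleGraph.Walk.cons (by
      have h2 := hc ⟨r, by omega⟩
      have h3 : ((⟨r, by omega⟩ : Fin (M+4)) + 1) = ⟨r+1, by omega⟩ := by
        apply Fin.ext
        rw [fin_add_one_val]
        show (r + 1) % (M+4) = r + 1
        exact Nat.mod_eq_of_lt (by omega)
      rwa [h3] at h2) (mkWalk f hc t (r+1) (by omega))

lemma mkWalk_length (f : Fin (M+4) → V) (hc : IsClosedFun G (M+4) f) :
    ∀ (t r : ℕ) (h : r + t + 1 = M + 4), (mkWalk G M f hc t r h).length = t + 1 := by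
  intro t
  induction t with
  | zero => intro r h; simp [mkWalk]
  | succ t ih => intro r h; simp [mkWalk, ih]

lemma idx_eq (r : ℕ) (hr : r < M+4) : idx M r = ⟨r, hr⟩ := by
  apply Fin.ext
  exact Nat.mod_eq_of_lt hr

lemma idx_add_one (r : ℕ) (hr : r < M+4) (hr1 : r + 1 < M + 4) :
    idx M r + 1 = ⟨r+1, hr1⟩ := by
  rw [idx_eq M r hr]
  apply Fin.ext
  rw [fin_add_one_val]
  exact Nat.mod_eq_of_lt hr1

lemma idx_add_one_top (r : ℕ) (hr : r < M+4) (hr1 : r + 1 = M + 4) :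
    idx M r + 1 = 0 := by
  rw [idx_eq M r hr]
  apply Fin.ext
  rw [fin_add_one_val]
  show (r + 1) % (M+4) = (0 : Fin (M+4)).val
  rw [hr1, Nat.mod_self, Fin.val_zero]

lemma mkWalk_edges (f : Fin (M+4) → V) (hc : IsClosedFun G (M+4) f) :
    ∀ (t r : ℕ) (h : r + t + 1 = M + 4), (mkWalk G M f hc t r h).edges
      = (List.range (t+1)).map (fun a => s(f (idx M (r+a)), f (idx M (r+a) + 1))) := by
  intro t
  induction t with
  | zero =>
    intro r h
    simp only [mkWalk, SimpleGraph.Walk.edges_cons, SimpleGraph.Walk.edges_nil]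
    rw [show List.range (0+1) = [0] by rfl, List.map_cons, List.map_nil]
    rw [idx_add_one_top M (r+0) (by omega) (by omega), idx_eq M (r+0) (by omega)]
    simp only [Nat.add_zero]
  | succ t ih =>
    intro r h
    simp only [mkWalk, SimpleGraph.Walk.edges_cons]
    rw [ih (r+1) (by omega)]
    conv_rhs => rw [List.range_succ_eq_map, List.map_cons, List.map_map]
    congr 1
    · rw [idx_add_one M (r+0) (by omega) (by omega), idx_eq M (r+0) (by omega)]
      simp only [Nat.add_zero]
    · apply List.map_congr_left
      intro a _
      show s(f (idx M (r + 1 + a)), f (idx M (r + 1 + a) + 1))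
        = s(f (idx M (r + Nat.succ a)), f (idx M (r + Nat.succ a) + 1))
      rw [show r + Nat.succ a = r + 1 + a by omega]

lemma mkWalk_support (f : Fin (M+4) → V) (hc : IsClosedFun G (M+4) f) :
    ∀ (t r : ℕ) (h : r + t + 1 = M + 4), (mkWalk G M f hc t r h).support
      = (List.range (t+1)).map (fun a => f (idx M (r+a))) ++ [f 0] := by
  intro t
  induction t with
  | zero =>
    intro r h
    simp only [mkWalk, SimpleGraph.Walk.support_cons, SimpleGraph.Walk.support_nil]
    rw [show List.range (0+1) = [0] by rfl, List.map_cons, List.map_nil]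
    rw [idx_eq M (r+0) (by omega)]
    rfl
  | succ t ih =>
    intro r h
    simp only [mkWalk, SimpleGraph.Walk.support_cons]
    rw [ih (r+1) (by omega)]
    conv_rhs => rw [List.range_succ_eq_map, List.map_cons, List.map_map]
    rw [idx_eq M (r+0) (by omega)]
    show f ⟨r+0, by omega⟩ :: ((List.range (t+1)).map (fun a => f (idx M (r+1+a))) ++ [f 0])
      = f ⟨r+0, by omega⟩ :: (((List.range (t+1)).map ((fun a => f (idx M (r+a))) ∘ Nat.succ)) ++ [f 0])
    congr 2
    apply List.map_congr_left
    intro a _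
    show f (idx M (r + 1 + a)) = f (idx M (r + Nat.succ a))
    rw [show r + Nat.succ a = r + 1 + a by omega]

lemma good_rainbow {γ : Type} (c : Sym2 V → γ) {f : Fin (M+4) → V}
    (hc : IsClosedFun G (M+4) f) (hg : GoodFun M c f) : HasRainbowCycle G c (M+4) := by
  have h0 : (⟨0, by omega⟩ : Fin (M+4)) = 0 := by
    apply Fin.ext
    simp
  let w0 := mkWalk G M f hc (M+3) 0 (by omega)
  let w : G.Walk (f 0) (f 0) := w0.copy (congrArg f h0) rfl
  have hlen : w.length = M + 4 := by
    show (w0.copy _ _).length = M + 4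
    rw [SimpleGraph.Walk.length_copy, mkWalk_length]
  have hedges : w.edges = (List.range (M+4)).map
      (fun a => s(f (idx M a), f (idx M a + 1))) := by
    show (w0.copy _ _).edges = _
    rw [SimpleGraph.Walk.edges_copy]
    rw [mkWalk_edges]
    apply List.map_congr_left
    intro a _
    rw [Nat.zero_add]
  have hrainbow : (w.edges.map c).Nodup := by
    rw [hedges, List.map_map]
    apply List.Nodup.map_on ?_ List.nodup_range
    intro x hx y hy hxy
    by_contra hne
    have hidx : idx M x ≠ idx M y := by
      intro h2
      apply hne
      have h3 := congrArg Fin.val h2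
      have hx4 := List.mem_range.mp hx
      have hy4 := List.mem_range.mp hy
      show x = y
      rw [← Nat.mod_eq_of_lt hx4, ← Nat.mod_eq_of_lt hy4]
      exact h3
    exact hg.2 (idx M x) (idx M y) hidx hxy
  have hsupport : w.support = (List.range (M+4)).map (fun a => f (idx M a)) ++ [f 0] := by
    show (w0.copy _ _).support = _
    rw [SimpleGraph.Walk.support_copy]
    rw [mkWalk_support]
    congr 1
    apply List.map_congr_left
    intro a _
    rw [Nat.zero_add]
  have htail : w.support.tail.Nodup := by
    rw [hsupport]
    rw [show List.range (M+4) = 0 :: List.map Nat.succ (List.range (M+3)) from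
      List.range_succ_eq_map (n := M+3), List.map_cons, List.cons_append, List.tail_cons, List.map_map]
    have hrw : ((List.range (M+3)).map ((fun a => f (idx M a)) ∘ Nat.succ)) ++ [f 0]
        = (List.range (M+4)).map (fun a => f (idx M (a+1))) := by
      rw [show List.range (M+4) = List.range (M+3) ++ [M+3] from List.range_succ (n := M+3),
        List.map_append]
      congr 1
      show [f 0] = [f (idx M (M+3+1))]
      have : idx M (M+3+1) = 0 := by
        apply Fin.ext
        show (M+4) % (M+4) = (0 : Fin (M+4)).val
        rw [Nat.mod_self, Fin.val_zero]
      rw [this]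
    rw [hrw]
    apply List.Nodup.map_on ?_ List.nodup_range
    intro x hx y hy hxy
    have hx4 := List.mem_range.mp hx
    have hy4 := List.mem_range.mp hy
    have h2 := hg.1 hxy
    have h3 := congrArg Fin.val h2
    have ex : (x+1) % (M+4) = if x + 1 = M+4 then 0 else x + 1 := by
      split_ifs with hh
      · rw [hh, Nat.mod_self]
      · exact Nat.mod_eq_of_lt (by omega)
    have ey : (y+1) % (M+4) = if y + 1 = M+4 then 0 else y + 1 := by
      split_ifs with hh
      · rw [hh, Nat.mod_self]
      · exact Nat.mod_eq_of_lt (by omega)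
    have h4 : (x+1) % (M+4) = (y+1) % (M+4) := h3
    rw [ex, ey] at h4
    split_ifs at h4 <;> omega
  have hnil : w ≠ SimpleGraph.Walk.nil := by
    intro hn
    have := congrArg SimpleGraph.Walk.length hn
    rw [hlen] at this
    simp at this
  refine ⟨f 0, w, ⟨⟨⟨hrainbow.of_map c⟩, hnil⟩, htail⟩, hlen, hrainbow⟩

end BuildWalk

section Counting

variable (M : ℕ)

noncomputable def degMap :
    {f : Fin (M+4) → V // IsClosedFun G (M+4) f ∧ ¬Function.Injective f} →
    Fin (M+4) × Fin (M+4) × {h : Fin (M+3) → V // IsWalkFun G (M+2) h} := fun x =>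
  have hex : ∃ a b : Fin (M+4), x.1 a = x.1 b ∧ a ≠ b := Function.not_injective_iff.mp x.2.2
  ⟨hex.choose, hex.choose_spec.choose,
    ⟨delMap M hex.choose_spec.choose x.1, delMap_walk G M _ x.2.1⟩⟩

lemma recon (d : Fin (M+4)) {f f' : Fin (M+4) → V}
    (h : delMap M d f = delMap M d f') (a : Fin (M+4)) (ha : a ≠ d)
    (hfa : f a = f d) (hfa' : f' a = f' d) : f = f' := by
  funext j
  by_cases hj : j = d
  · rw [hj, ← hfa, ← hfa']
    exact delMap_eq_on M d h a ha
  · exact delMap_eq_on M d h j hj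

lemma degMap_spec (x : {f : Fin (M+4) → V // IsClosedFun G (M+4) f ∧ ¬Function.Injective f}) :
    x.1 (degMap G M x).1 = x.1 (degMap G M x).2.1 ∧ (degMap G M x).1 ≠ (degMap G M x).2.1 ∧
      (degMap G M x).2.2.1 = delMap M (degMap G M x).2.1 x.1 := by
  have hex : ∃ a b : Fin (M+4), x.1 a = x.1 b ∧ a ≠ b := Function.not_injective_iff.mp x.2.2
  exact ⟨hex.choose_spec.choose_spec.1, hex.choose_spec.choose_spec.2, rfl⟩

lemma degMap_injective : Function.Injective (degMap G M) := by
  intro x y h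
  have sx := degMap_spec G M x
  have sy := degMap_spec G M y
  rw [h] at sx
  apply Subtype.ext
  have hdel : delMap M (degMap G M y).2.1 x.1 = delMap M (degMap G M y).2.1 y.1 := by
    rw [← sx.2.2, ← sy.2.2]
  exact recon M (degMap G M y).2.1 hdel (degMap G M y).1 sx.2.1 sx.1 sy.1

variable {γ : Type} (c : Sym2 V → γ)

noncomputable def colMap :
    {f : Fin (M+4) → V // IsClosedFun G (M+4) f ∧ BadCol M c f} →
    Fin (M+4) × Fin (M+4) × {h : Fin (M+3) → V // IsWalkFun G (M+2) h} := fun x =>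
  have hex : BadCol M c x.1 := x.2.2
  ⟨hex.choose, hex.choose_spec.choose,
    ⟨delMap M (hex.choose_spec.choose + 1) x.1, delMap_walk G M _ x.2.1⟩⟩

lemma one_ne_zero_fin : (1 : Fin (M+4)) ≠ 0 := by
  intro h
  have h2 : ((1 : Fin (M+4))).val = 0 := by rw [h]; rfl
  have h3 : ((1 : Fin (M+4))).val = 1 := rfl
  omega

lemma colMap_spec (x : {f : Fin (M+4) → V // IsClosedFun G (M+4) f ∧ BadCol M c f}) :
    (colMap G M c x).1 ≠ (colMap G M c x).2.1 ∧
      (colMap G M c x).1 ≠ (colMap G M c x).2.1 + 1 ∧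
      c (edgeAt M x.1 (colMap G M c x).1) = c (edgeAt M x.1 (colMap G M c x).2.1) ∧
      (colMap G M c x).2.2.1 = delMap M ((colMap G M c x).2.1 + 1) x.1 := by
  have hex : BadCol M c x.1 := x.2.2
  exact ⟨hex.choose_spec.choose_spec.1, hex.choose_spec.choose_spec.2.1,
    hex.choose_spec.choose_spec.2.2, rfl⟩

lemma recon_col (hP : ProperColoring G c) (i j : Fin (M+4)) (hij : i ≠ j) (hij1 : i ≠ j + 1)
    {f f' : Fin (M+4) → V} (hcf : IsClosedFun G (M+4) f) (hcf' : IsClosedFun G (M+4) f')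
    (hc1 : c (edgeAt M f i) = c (edgeAt M f j)) (hc2 : c (edgeAt M f' i) = c (edgeAt M f' j))
    (h : delMap M (j+1) f = delMap M (j+1) f') : f = f' := by
  have off := delMap_eq_on M (j + 1) h
  have hii1 : i + 1 ≠ j + 1 := fun hh => hij (add_right_cancel hh)
  have hjj1 : j ≠ j + 1 := by
    intro hh
    have := left_eq_add.mp hh
    exact one_ne_zero_fin M this
  have exi : f i = f' i := off i hij1
  have exi1 : f (i+1) = f' (i+1) := off (i+1) hii1
  have exj : f j = f' j := off j hjj1
  funext t
  by_cases ht : t = j + 1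
  · rw [ht]
    by_contra hne
    have hE : c (s(f j, f (j+1))) = c (s(f j, f' (j+1))) := by
      calc c (s(f j, f (j+1))) = c (s(f i, f (i+1))) := hc1.symm
      _ = c (s(f' i, f' (i+1))) := by rw [exi, exi1]
      _ = c (s(f' j, f' (j+1))) := hc2
      _ = c (s(f j, f' (j+1))) := by rw [← exj]
    have hneE : s(f j, f (j+1)) ≠ s(f j, f' (j+1)) := by
      intro hh
      exact hne (Sym2.congr_right.mp hh)
    have hadj1 : G.Adj (f j) (f (j+1)) := hcf j
    have hadj2 : G.Adj (f j) (f' (j+1)) := by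
      rw [exj]
      exact hcf' j
    exact hP _ _ (G.mem_edgeSet.mpr hadj1) (G.mem_edgeSet.mpr hadj2) hneE
      ⟨f j, Sym2.mem_mk_left _ _, Sym2.mem_mk_left _ _⟩ hE
  · exact off t ht

lemma colMap_injective (hP : ProperColoring G c) : Function.Injective (colMap G M c) := by
  intro x y h
  have sx := colMap_spec G M c x
  have sy := colMap_spec G M c y
  rw [h] at sx
  apply Subtype.ext
  have hdel : delMap M ((colMap G M c y).2.1 + 1) x.1 = delMap M ((colMap G M c y).2.1 + 1) y.1 := by
    rw [← sx.2.2.2, ← sy.2.2.2]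
  exact recon_col G M c hP (colMap G M c y).1 (colMap G M c y).2.1 sx.1 sx.2.1
    x.2.1 y.2.1 sx.2.2.1 sy.2.2.1 hdel

lemma card_closed_le (hP : ProperColoring G c) (hno : ¬ HasRainbowCycle G c (M+4)) :
    Ncl G (M+4) ≤ 2 * ((M+4) * ((M+4) * p G (M+2))) := by
  classical
  rw [← card_closed]
  have hgood : IsEmpty {f : Fin (M+4) → V // IsClosedFun G (M+4) f ∧ GoodFun M c f} := by
    constructor
    rintro ⟨f, hc, hg⟩
    exact hno (good_rainbow G M c hc hg)
  set T1 := {f : Fin (M+4) → V // IsClosedFun G (M+4) f ∧ ¬Function.Injective f}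
  set T2 := {f : Fin (M+4) → V // IsClosedFun G (M+4) f ∧ BadCol M c f}
  set T3 := {f : Fin (M+4) → V // IsClosedFun G (M+4) f ∧ GoodFun M c f}
  have hsplit : Fintype.card {f : Fin (M+4) → V // IsClosedFun G (M+4) f}
      ≤ Fintype.card T1 + (Fintype.card T2 + Fintype.card T3) := by
    have : Fintype.card {f : Fin (M+4) → V // IsClosedFun G (M+4) f}
        ≤ Fintype.card (T1 ⊕ (T2 ⊕ T3)) := by
      apply Fintype.card_le_of_injective
        (f := fun x => if h1 : ¬Function.Injective x.1 then Sum.inl (⟨x.1, x.2, h1⟩ : T1) else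
          if h2 : BadCol M c x.1 then Sum.inr (Sum.inl (⟨x.1, x.2, h2⟩ : T2)) else
          Sum.inr (Sum.inr (⟨x.1, x.2, by
            rcases cover M c x.1 with h | h | h
            · exact absurd h h1
            · exact absurd h h2
            · exact h⟩ : T3)))
      intro x y h
      dsimp only at h
      apply Subtype.ext
      split_ifs at h
      all_goals try (simp at h; done)
      all_goals injection h with h
      all_goals try (simp at h; done)
      all_goals try injection h with h
      all_goals try injection h with h
      all_goals exact h
    simpa [Fintype.card_sum] using this
  have h1 : Fintype.card T1 ≤ (M+4) * ((M+4) * p G (M+2)) := by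
    calc Fintype.card T1 ≤ Fintype.card (Fin (M+4) × Fin (M+4) × {h : Fin (M+3) → V // IsWalkFun G (M+2) h}) :=
      Fintype.card_le_of_injective _ (degMap_injective G M)
    _ = (M+4) * ((M+4) * p G (M+2)) := by
      rw [Fintype.card_prod, Fintype.card_prod, Fintype.card_fin, card_walkT]
  have h2 : Fintype.card T2 ≤ (M+4) * ((M+4) * p G (M+2)) := by
    calc Fintype.card T2 ≤ Fintype.card (Fin (M+4) × Fin (M+4) × {h : Fin (M+3) → V // IsWalkFun G (M+2) h}) :=
      Fintype.card_le_of_injective _ (colMap_injective G M c hP)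
    _ = (M+4) * ((M+4) * p G (M+2)) := by
      rw [Fintype.card_prod, Fintype.card_prod, Fintype.card_fin, card_walkT]
  have h3 : Fintype.card T3 = 0 := by
    rw [Fintype.card_eq_zero_iff]
    exact hgood
  omega

end Counting

end RainbowC2k

/-- a properly edge-coloured graph on `n` vertices with no rainbow
`C_{2k}` contains at most `C·n²` paths of length 2, for a constant `C = C(k)`. -/
theorem count_paths_of_length_two (k : ℕ) (hk : 2 ≤ k) :
    ∃ C : ℕ, ∀ (V : Type) [Fintype V] (G : SimpleGraph V) (γ : Type) (c : Sym2 V → γ),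
      ProperColoring G c → ¬ HasRainbowCycle G c (2 * k) →
      {p : V × V × V | G.Adj p.1 p.2.1 ∧ G.Adj p.2.1 p.2.2 ∧ p.1 ≠ p.2.2}.ncard
        ≤ C * Fintype.card V ^ 2 := by
  refine ⟨8 * k^2, ?_⟩
  intro V _ G γ c hP hno
  letI : DecidableEq V := Classical.decEq V
  letI : DecidableRel G.Adj := fun a b => Classical.dec _
  open RainbowC2k in
  -- Step A : the number of paths of length two is at most `p G 2`.
  have stepA : {p : V × V × V | G.Adj p.1 p.2.1 ∧ G.Adj p.2.1 p.2.2 ∧ p.1 ≠ p.2.2}.ncard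
      ≤ RainbowC2k.p G 2 := by
    set S := {p : V × V × V | G.Adj p.1 p.2.1 ∧ G.Adj p.2.1 p.2.2 ∧ p.1 ≠ p.2.2} with hS
    have hΦ : ∃ Φ : S → {f : Fin (2+1) → V // RainbowC2k.IsWalkFun G 2 f}, Function.Injective Φ := by
      refine ⟨fun x => ⟨fun i => if i.val = 0 then x.1.1 else if i.val = 1 then x.1.2.1 else x.1.2.2, ?_⟩, ?_⟩
      · intro i
        fin_cases i
        · simpa using x.2.1
        · simpa using x.2.2.1
      · intro a b h
        have h' := congrArg Subtype.val h
        have e0 := congrFun h' ⟨0, by omega⟩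
        have e1 := congrFun h' ⟨1, by omega⟩
        have e2 := congrFun h' ⟨2, by omega⟩
        simp only at e0 e1 e2
        apply Subtype.ext
        exact Prod.ext e0 (Prod.ext e1 e2)
      done
    obtain ⟨Φ, hΦinj⟩ := hΦ
    calc S.ncard = Nat.card S := (Nat.card_coe_set_eq S).symm
    _ ≤ Nat.card {f : Fin (2+1) → V // RainbowC2k.IsWalkFun G 2 f} :=
        Nat.card_le_card_of_injective Φ hΦinj
    _ = Fintype.card {f : Fin (2+1) → V // RainbowC2k.IsWalkFun G 2 f} := Nat.card_eq_fintype_card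
    _ = RainbowC2k.p G 2 := RainbowC2k.card_walkT G 2
  by_cases hp2 : RainbowC2k.p G 2 = 0
  · calc {p : V × V × V | G.Adj p.1 p.2.1 ∧ G.Adj p.2.1 p.2.2 ∧ p.1 ≠ p.2.2}.ncard
        ≤ RainbowC2k.p G 2 := stepA
    _ = 0 := hp2
    _ ≤ 8 * k^2 * Fintype.card V ^ 2 := Nat.zero_le _
  · have hp : 0 < RainbowC2k.p G 2 := Nat.pos_of_ne_zero hp2
    set n := Fintype.card V with hn
    set M := 2 * k - 4 with hM
    have hK : 2 * k = M + 4 := by omega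
    haveI : NeZero (2 * k) := ⟨by omega⟩
    have h7 : RainbowC2k.p G (2*k) ≤ n * RainbowC2k.Ncl G (2*k) := RainbowC2k.p_le_card_mul_N G k
    have h8 : RainbowC2k.Ncl G (M+4) ≤ 2 * ((M+4) * ((M+4) * RainbowC2k.p G (M+2))) :=
      RainbowC2k.card_closed_le G M c hP (by rw [← hK]; exact hno)
    rw [← hK] at h8
    have hM2 : M + 2 = 2 * (k-1) := by omega
    rw [hM2] at h8
    have h9 := RainbowC2k.interp G hp (k-1)
    have e1 : (k-1) + 1 = k := by omega
    have e2 : 2*(k-1)+2 = 2*k := by omega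
    rw [e1, e2] at h9
    have h10 := RainbowC2k.chain G hp (k-1)
    rw [e1] at h10
    set A := RainbowC2k.p G (2*k) with hA
    set B := RainbowC2k.p G (2*(k-1)) with hB
    set q := RainbowC2k.p G 2 with hq
    -- h7 : A ≤ n * Ncl ; h8 : Ncl ≤ 2*((2k)*((2k)*B)) ; h9 : B^k ≤ A^(k-1)*n ; h10 : q^k ≤ n^(k-1)*A
    have h12 : A ≤ 8*k^2*(n*B) := by
      calc A ≤ n * (2 * ((2*k) * ((2*k) * B))) :=
        le_trans h7 (Nat.mul_le_mul_left n h8)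
      _ = 8*k^2*(n*B) := by ring
    have h13 : A^k ≤ (8*k^2)^k * (n^k * B^k) := by
      calc A^k ≤ (8*k^2*(n*B))^k := Nat.pow_le_pow_left h12 k
      _ = (8*k^2)^k * (n^k * B^k) := by ring
    have h14 : A^k ≤ (8*k^2)^k * (n^k * (A^(k-1)*n)) :=
      le_trans h13 (Nat.mul_le_mul_left _ (Nat.mul_le_mul_left _ h9))
    have h15 : A * A^(k-1) ≤ ((8*k^2)^k * n^(k+1)) * A^(k-1) := by
      calc A * A^(k-1) = A^(k-1) * A := by ring
      _ = A^((k-1)+1) := (pow_succ A (k-1)).symm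
      _ = A^k := by rw [e1]
      _ ≤ (8*k^2)^k * (n^k * (A^(k-1)*n)) := h14
      _ = ((8*k^2)^k * n^(k+1)) * A^(k-1) := by ring
    have hA1 : 0 < A^(k-1) := pow_pos (RainbowC2k.p_pos G hp (2*k)) _
    have h16 : A ≤ (8*k^2)^k * n^(k+1) := Nat.le_of_mul_le_mul_right h15 hA1
    have h17 : q^k ≤ n^(k-1) * ((8*k^2)^k * n^(k+1)) :=
      le_trans h10 (Nat.mul_le_mul_left _ h16)
    have h18 : q^k ≤ (8*k^2*n^2)^k := by
      calc q^k ≤ n^(k-1) * ((8*k^2)^k * n^(k+1)) := h17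
      _ = (8*k^2)^k * (n^(k-1) * n^(k+1)) := by ring
      _ = (8*k^2)^k * (n^2)^k := by
          rw [← pow_add, show (k-1)+(k+1) = 2*k by omega, ← pow_mul]
      _ = (8*k^2*n^2)^k := by ring
    have h19 : q ≤ 8*k^2*n^2 := by
      by_contra hlt
      push_neg at hlt
      exact absurd h18 (not_le.mpr (Nat.pow_lt_pow_left hlt (by omega)))
    calc {p : V × V × V | G.Adj p.1 p.2.1 ∧ G.Adj p.2.1 p.2.2 ∧ p.1 ≠ p.2.2}.ncard
        ≤ q := stepA
    _ ≤ 8*k^2*n^2 := h19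
    _ = 8*k^2 * Fintype.card V ^ 2 := by rw [hn]
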